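/- Let f : ℝ^p → ℝ be differentiable and convex, and g : ℝ^p → ℝ ∪ {+∞} be proper, closed, and μ_g-strongly convex with μ_g > 0. Let x⁰ ∈ dom f ∩ dom g, ξ⁰ ∈ ∂g(x⁰), and for τ ∈ (0,1] let x*_τ be a solution of the parametric optimality condition 0 ∈ τ∇f(x*_τ) − (1 − τ)ξ⁰ + ∂g(x*_τ). Then ‖x⁰ − x*_τ‖₂ ≤ (τ/μ_g)·‖∇f(x⁰) + ξ⁰‖₂. -/

import Mathlib

open Set
open scoped RealInnerProductSpace

noncomputable section

/-- `ℝ^p` with the Euclidean inner product. -/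
abbrev Euc (p : ℕ) := EuclideanSpace ℝ (Fin p)

/-- The weighted (local) norm `‖u‖_H := √⟪H u, u⟫` induced by an operator `H`. -/
noncomputable def wnorm {p : ℕ} (H : Euc p →L[ℝ] Euc p) (u : Euc p) : ℝ :=
  Real.sqrt ⟪H u, u⟫

/-- `v` is a subgradient at `y` of the proper convex function equal to `g` on its
effective domain `S` (and `+∞` outside). -/
def IsSubgradient {p : ℕ} (g : Euc p → ℝ) (S : Set (Euc p)) (v y : Euc p) : Prop :=
  y ∈ S ∧ ∀ z ∈ S, g y + ⟪v, z - y⟫ ≤ g z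

/-- Closedness of the extended-real-valued function equal to `g` on `S` and `+∞`
outside, expressed as closedness of its epigraph. -/
def ClosedOn {p : ℕ} (g : Euc p → ℝ) (S : Set (Euc p)) : Prop :=
  IsClosed {q : Euc p × ℝ | q.1 ∈ S ∧ g q.1 ≤ q.2}

/-- Strengthened subgradient inequality for a strongly convex function. -/
lemma subgrad_strong_aux {p : ℕ} {g : Euc p → ℝ} {S : Set (Euc p)} {μ : ℝ} {v y : Euc p}
    (hs : StrongConvexOn S μ g) (hμ : 0 ≤ μ) (hv : IsSubgradient g S v y) :
    ∀ z ∈ S, ⟪v, z - y⟫ + μ / 2 * ‖z - y‖ ^ 2 ≤ g z - g y := by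
  intro z hz
  set c : ℝ := μ / 2 * ‖z - y‖ ^ 2 with hc
  have hc0 : 0 ≤ c := by positivity
  refine le_of_forall_pos_le_add fun ε hε => ?_
  set l : ℝ := min (1/2) (ε / (c + 1)) with hl
  have hl0 : 0 < l := by
    apply lt_min (by norm_num)
    positivity
  have hl1 : l ≤ 1/2 := min_le_left _ _
  have hlc : l * c ≤ ε := by
    have h1 : l ≤ ε / (c + 1) := min_le_right _ _
    have h2 : l * c ≤ (ε / (c + 1)) * c := by
      exact mul_le_mul_of_nonneg_right h1 hc0
    have h3 : (ε / (c + 1)) * c ≤ ε := by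
      rw [div_mul_eq_mul_div, div_le_iff₀ (by linarith)]
      nlinarith
    linarith
  -- strong convexity at the point w = l • z + (1 - l) • y
  have hmem : l • z + (1 - l) • y ∈ S := hs.1 hz hv.1 (le_of_lt hl0) (by linarith) (by ring)
  have hsc := hs.2 hz hv.1 (le_of_lt hl0) (show (0:ℝ) ≤ 1 - l by linarith) (by ring)
  have hsub := hv.2 _ hmem
  have hwy : l • z + (1 - l) • y - y = l • (z - y) := by
    rw [sub_smul, one_smul, smul_sub]; abel
  rw [hwy, real_inner_smul_right] at hsub
  simp only [smul_eq_mul] at hsc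
  have : g y + l * ⟪v, z - y⟫ ≤ l * g z + (1 - l) * g y - l * (1 - l) * c := by
    calc g y + l * ⟪v, z - y⟫ ≤ g (l • z + (1 - l) • y) := hsub
    _ ≤ l * g z + (1 - l) * g y - l * (1 - l) * (μ / 2 * ‖z - y‖ ^ 2) := hsc
    _ = l * g z + (1 - l) * g y - l * (1 - l) * c := by rw [hc]
  have hdiv : l * ⟪v, z - y⟫ ≤ l * (g z - g y - (1 - l) * c) := by nlinarith
  have := le_of_mul_le_mul_left hdiv hl0
  nlinarith

/-- Gradient inequality for a convex differentiable function. -/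
lemma grad_ineq_aux {p : ℕ} {f : Euc p → ℝ} {f' : Euc p → Euc p}
    (hf : ∀ z, HasGradientAt f (f' z) z) (hc : ConvexOn ℝ univ f) (x y : Euc p) :
    f x + ⟪f' x, y - x⟫ ≤ f y := by
  set φ : ℝ → ℝ := fun s => f (x + s • (y - x)) with hφdef
  have hline : ∀ s : ℝ, HasDerivAt (fun s : ℝ => x + s • (y - x)) (y - x) s := by
    intro s
    simpa using ((hasDerivAt_id s).smul_const (y - x)).const_add x
  have hφd : ∀ s : ℝ, HasDerivAt φ ⟪f' (x + s • (y - x)), y - x⟫ s := by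
    intro s
    have h1 : HasFDerivAt f (InnerProductSpace.toDual ℝ (Euc p) (f' (x + s • (y - x))))
        (x + s • (y - x)) := hf (x + s • (y - x))
    have := h1.comp_hasDerivAt s (hline s)
    simp [InnerProductSpace.toDual_apply_apply] at this
    exact this
  have hφc : ConvexOn ℝ univ φ := by
    have h := hc.comp_affineMap (AffineMap.lineMap x y : ℝ →ᵃ[ℝ] Euc p)
    have heq : φ = f ∘ (AffineMap.lineMap x y : ℝ →ᵃ[ℝ] Euc p) := by
      funext s
      simp [hφdef, AffineMap.lineMap_apply, add_comm]
    rw [heq]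
    simpa using h
  have hd0 : deriv φ 0 = ⟪f' x, y - x⟫ := by
    have := (hφd 0).deriv
    simpa using this
  have hslope := hφc.deriv_le_slope (mem_univ (0:ℝ)) (mem_univ (1:ℝ)) one_pos
    (hφd 0).differentiableAt
  rw [hd0] at hslope
  have hs : slope φ 0 1 = f y - f x := by
    simp [slope_def_field, hφdef]
  rw [hs] at hslope
  linarith

/-- Lemma: bound on `‖x⁰ - x*_τ‖₂` when `g` is strongly convex. -/
theorem stmt_8 {p : ℕ}
    (f g : Euc p → ℝ) (Dg : Set (Euc p))
    (f' : Euc p → Euc p)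
    (μg t : ℝ)
    (x0 ξ0 xt : Euc p)
    -- `f` is differentiable and convex
    (hf_grad : ∀ z, HasGradientAt f (f' z) z)
    (hf_convex : ConvexOn ℝ univ f)
    -- `g` is proper, closed, and `μg`-strongly convex
    (hg_proper : Dg.Nonempty)
    (hg_closed : ClosedOn g Dg)
    (hμg : 0 < μg)
    (hg_strong : StrongConvexOn Dg μg g)
    -- initial point and subgradient
    (hx0 : x0 ∈ Dg)
    (hξ0 : IsSubgradient g Dg ξ0 x0)
    -- `xt` solves the parametric optimality condition at `t`
    (ht : t ∈ Ioc (0 : ℝ) 1)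
    (hxt : IsSubgradient g Dg ((1 - t) • ξ0 - t • f' xt) xt) :
    ‖x0 - xt‖ ≤ (t / μg) * ‖f' x0 + ξ0‖ := by
  obtain ⟨ht0, ht1⟩ := ht
  have hxtS : xt ∈ Dg := hxt.1
  have h1 := subgrad_strong_aux hg_strong hμg.le hξ0 xt hxtS
  have h2 := subgrad_strong_aux hg_strong hμg.le hxt x0 hx0
  have e2 : ⟪(1 - t) • ξ0 - t • f' xt, x0 - xt⟫
      = (1 - t) * ⟪ξ0, x0 - xt⟫ - t * ⟪f' xt, x0 - xt⟫ := by
    rw [inner_sub_left, real_inner_smul_left, real_inner_smul_left]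
  have e1 : ⟪ξ0, xt - x0⟫ = -⟪ξ0, x0 - xt⟫ := by
    rw [show xt - x0 = -(x0 - xt) by abel, inner_neg_right]
  have hnn : ‖xt - x0‖ = ‖x0 - xt‖ := norm_sub_rev _ _
  rw [e2] at h2
  rw [e1, hnn] at h1
  have m1 := grad_ineq_aux hf_grad hf_convex xt x0
  have m2 := grad_ineq_aux hf_grad hf_convex x0 xt
  have e3 : ⟪f' x0, xt - x0⟫ = -⟪f' x0, x0 - xt⟫ := by
    rw [show xt - x0 = -(x0 - xt) by abel, inner_neg_right]
  rw [e3] at m2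
  have hmono : ⟪f' xt, x0 - xt⟫ ≤ ⟪f' x0, x0 - xt⟫ := by linarith
  have key : μg * ‖x0 - xt‖ ^ 2 ≤ t * ⟪f' x0 + ξ0, x0 - xt⟫ := by
    rw [inner_add_left]
    nlinarith [mul_le_mul_of_nonneg_left hmono ht0.le]
  have cs : ⟪f' x0 + ξ0, x0 - xt⟫ ≤ ‖f' x0 + ξ0‖ * ‖x0 - xt‖ := real_inner_le_norm _ _
  have key2 : μg * ‖x0 - xt‖ ^ 2 ≤ t * (‖f' x0 + ξ0‖ * ‖x0 - xt‖) :=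
    le_trans key (mul_le_mul_of_nonneg_left cs ht0.le)
  rcases eq_or_lt_of_le (norm_nonneg (x0 - xt)) with h0 | h0
  · rw [← h0]
    positivity
  · rw [div_mul_eq_mul_div, le_div_iff₀ hμg]
    nlinarith

end
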